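/- Let n ≥ 1, 0 ≤ k ≤ n, and r ≥ 1. The pullback map Φ^* restricts to a linear isomorphism from P̊_r^-Λ^k(T^n) onto P̊̊_{2r+k}^-Λ^k_e(S^n), the space of even forms in P̊̊_{2r+k}^-Λ^k(S^n). -/

import Mathlib

open scoped BigOperators
open MeasureTheory

noncomputable section

/-- Vectors in `ℝ^m`. -/
abbrev Vec (m : ℕ) := Fin m → ℝ

/-- Differential `k`-forms on `ℝ^m`, given pointwise as alternating `k`-tensors. -/
abbrev Form (m k : ℕ) := Vec m → (Vec m [⋀^Fin k]→ₗ[ℝ] ℝ)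

/-- A multivariate polynomial has (total) degree at most `r : ℤ`. -/
def degLE {m : ℕ} (r : ℤ) (p : MvPolynomial (Fin m) ℝ) : Prop :=
  ∀ d ∈ p.support, ((d.sum fun _ e => e : ℕ) : ℤ) ≤ r

/-- `P_rΛ^k(ℝ^m)`: differential `k`-forms with polynomial coefficients of degree at most `r`. -/
def PL (m k : ℕ) (r : ℤ) : Set (Form m k) :=
  {α | ∀ v : Fin k → Vec m, ∃ p : MvPolynomial (Fin m) ℝ,
      degLE r p ∧ ∀ x, α x v = MvPolynomial.eval x p}

/-- Interior product with the radial vector field `X = Σ xᵢ ∂/∂xᵢ`. -/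
def iU {m k : ℕ} (β : Form m (k + 1)) : Form m k := fun x => (β x).curryLeft x

/-- `P_r⁻Λ^k(ℝ^m) := i_X P_{r-1}Λ^{k+1}(ℝ^m)`. -/
def PLm (m k : ℕ) (r : ℤ) : Set (Form m k) := iU '' PL m (k + 1) (r - 1)

/-- The reflection negating the `i`-th coordinate, as a map. -/
def reflFun (m : ℕ) (i : Fin m) (u : Vec m) : Vec m := fun j => if j = i then -u j else u j

/-- The reflection negating the `i`-th coordinate, as a linear map. -/
def reflLin (m : ℕ) (i : Fin m) : Vec m →ₗ[ℝ] Vec m :=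
  LinearMap.pi fun j => if j = i then -LinearMap.proj j else LinearMap.proj j

/-- Pullback of an ambient form along the reflection `R_i`. -/
def reflPull (m k : ℕ) (i : Fin m) (α : Form m k) : Form m k :=
  fun x => (α (reflFun m i x)).compLinearMap (reflLin m i)

/-- A form on `ℝ^m` is even if it is invariant under all coordinate reflections. -/
def IsEven (m k : ℕ) (α : Form m k) : Prop := ∀ i, reflPull m k i α = α

/-- A form on `ℝ^m` is odd if every coordinate reflection negates it. -/
def IsOdd (m k : ℕ) (α : Form m k) : Prop := ∀ i, reflPull m k i α = -α

/-- The map `Φ(u) = (u₁², …, u_m²)`. -/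
def Phi (m : ℕ) (u : Vec m) : Vec m := fun i => u i ^ 2

/-- The differential of `Φ` at `u`. -/
def dPhi (m : ℕ) (u : Vec m) : Vec m →ₗ[ℝ] Vec m :=
  LinearMap.pi fun i => (2 * u i) • LinearMap.proj i

/-- Pullback of ambient forms along `Φ`. -/
def phiPull (m k : ℕ) (α : Form m k) : Form m k :=
  fun u => (α (Phi m u)).compLinearMap (dPhi m u)

/-- The standard simplex `T^{m-1} ⊂ ℝ^m`. -/
def simplexSet (m : ℕ) : Set (Vec m) := {x | (∀ i, 0 ≤ x i) ∧ ∑ i, x i = 1}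

/-- The unit sphere `S^{m-1} ⊂ ℝ^m`. -/
def sphereSet (m : ℕ) : Set (Vec m) := {u | ∑ i, u i ^ 2 = 1}

/-- The linear functional `v ↦ ⟨u, v⟩`. -/
def dotLin (m : ℕ) (u : Vec m) : Vec m →ₗ[ℝ] ℝ := ∑ i, u i • LinearMap.proj i

/-- Orthogonal projection onto the tangent space of the sphere at `u`. -/
def projSph (m : ℕ) (u : Vec m) : Vec m →ₗ[ℝ] Vec m :=
  LinearMap.id - (dotLin m u).smulRight u

/-- The linear functional `v ↦ Σ vᵢ`. -/
def sumLin (m : ℕ) : Vec m →ₗ[ℝ] ℝ := ∑ i, LinearMap.proj i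

/-- Orthogonal projection onto the tangent hyperplane `{Σ vᵢ = 0}` of the simplex. -/
def projSim (m : ℕ) : Vec m →ₗ[ℝ] Vec m :=
  LinearMap.id - ((m : ℝ)⁻¹ • sumLin m).smulRight (fun _ => 1)

/-- Differential `k`-forms on a subset `M ⊆ ℝ^m`, encoded at each point by the canonical
alternating tensor on `ℝ^m` that vanishes in the directions normal to `M` (i.e. the
pullback along the inclusion, extended by the tangent projection). -/
abbrev FormOn (m : ℕ) (M : Set (Vec m)) (k : ℕ) := M → (Vec m [⋀^Fin k]→ₗ[ℝ] ℝ)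

/-- Restriction (pullback along the inclusion) of an ambient form to the simplex. -/
def resSim (m k : ℕ) (α : Form m k) : FormOn m (simplexSet m) k :=
  fun x => (α x.1).compLinearMap (projSim m)

/-- Restriction (pullback along the inclusion) of an ambient form to the sphere. -/
def resSph (m k : ℕ) (α : Form m k) : FormOn m (sphereSet m) k :=
  fun u => (α u.1).compLinearMap (projSph m u.1)

/-- `P_rΛ^k(T^{m-1})`. -/
def PLsim (m k : ℕ) (r : ℤ) : Set (FormOn m (simplexSet m) k) := resSim m k '' PL m k r

/-- `P_rΛ^k(S^{m-1})`. -/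
def PLsph (m k : ℕ) (r : ℤ) : Set (FormOn m (sphereSet m) k) := resSph m k '' PL m k r

/-- `P_r⁻Λ^k(T^{m-1})`. -/
def PLmsim (m k : ℕ) (r : ℤ) : Set (FormOn m (simplexSet m) k) := resSim m k '' PLm m k r

/-- `P_r⁻Λ^k(S^{m-1})`. -/
def PLmsph (m k : ℕ) (r : ℤ) : Set (FormOn m (sphereSet m) k) := resSph m k '' PLm m k r

lemma phi_mem_simplex {m : ℕ} {u : Vec m} (hu : u ∈ sphereSet m) :
    Phi m u ∈ simplexSet m :=
  ⟨fun _ => sq_nonneg _, hu⟩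

/-- Pullback `Φ^* : Λ^k(T^{m-1}) → Λ^k(S^{m-1})` along `Φ : S^{m-1} → T^{m-1}`. -/
def phiPullTS (m k : ℕ) (a : FormOn m (simplexSet m) k) : FormOn m (sphereSet m) k :=
  fun u => (a ⟨Phi m u.1, phi_mem_simplex u.2⟩).compLinearMap
    ((dPhi m u.1).comp (projSph m u.1))

lemma refl_mem_sphere {m : ℕ} {i : Fin m} {u : Vec m} (hu : u ∈ sphereSet m) :
    reflFun m i u ∈ sphereSet m := by
  have : ∀ j, (reflFun m i u j) ^ 2 = u j ^ 2 := by
    intro j; simp only [reflFun]; split <;> ring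
  simpa only [sphereSet, Set.mem_setOf_eq, this] using hu

/-- Pullback of a form on the sphere along the reflection `R_i`. -/
def reflPullSph (m k : ℕ) (i : Fin m) (α : FormOn m (sphereSet m) k) :
    FormOn m (sphereSet m) k :=
  fun u => (α ⟨reflFun m i u.1, refl_mem_sphere u.2⟩).compLinearMap (reflLin m i)

/-- A form on the sphere is even if it is invariant under all coordinate reflections. -/
def IsEvenSph (m k : ℕ) (α : FormOn m (sphereSet m) k) : Prop :=
  ∀ i, reflPullSph m k i α = α

/-- A form on the sphere is odd if every coordinate reflection negates it. -/
def IsOddSph (m k : ℕ) (α : FormOn m (sphereSet m) k) : Prop :=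
  ∀ i, reflPullSph m k i α = -α

/-- The bubble function `u_N = u₁ ⋯ u_m`. -/
def bubble (m : ℕ) (u : Vec m) : ℝ := ∏ i, u i

/-- Multiplication of a form on the sphere by the bubble function. -/
def bubbleSmul (m k : ℕ) (α : FormOn m (sphereSet m) k) : FormOn m (sphereSet m) k :=
  fun u => bubble m u.1 • α u

/-- Multiplication of an ambient form by the bubble function. -/
def bubbleSmulAmb (m k : ℕ) (α : Form m k) : Form m k :=
  fun u => bubble m u • α u

/-- The standard volume form on `ℝ^m`. -/
def volForm (m : ℕ) : (Vec m) [⋀^Fin m]→ₗ[ℝ] ℝ := (Pi.basisFun ℝ (Fin m)).det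

/-- Iterated interior product: insert the vectors `v 0, …, v (k-1)` into the
first `k` slots of an alternating `(k+j)`-tensor. -/
def contrMany {m : ℕ} : (k : ℕ) → (Fin k → Vec m) → {j : ℕ} →
    ((Vec m) [⋀^Fin (k + j)]→ₗ[ℝ] ℝ) → ((Vec m) [⋀^Fin j]→ₗ[ℝ] ℝ)
  | 0, _, j, α => α.domDomCongr (finCongr (Nat.zero_add j))
  | (k + 1), v, j, α =>
      contrMany k (fun i => v i.succ)
        ((α.domDomCongr (finCongr (by omega : (k + 1) + j = (k + j) + 1))).curryLeft (v 0))

/-- The Hodge star on alternating tensors on `ℝ^m` (standard metric and orientation):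
`(⋆α)(w₁,…,w_{m-k}) = (1/k!) Σ_g α(e_{g 0},…,e_{g(k-1)}) vol(e_{g 0},…,e_{g(k-1)},w₁,…,w_{m-k})`. -/
def starAlt (m k : ℕ) (α : (Vec m) [⋀^Fin k]→ₗ[ℝ] ℝ) : (Vec m) [⋀^Fin (m - k)]→ₗ[ℝ] ℝ :=
  if h : k ≤ m then
    (k.factorial : ℝ)⁻¹ •
      ∑ g : Fin k → Fin m,
        α (fun i => Pi.single (g i) 1) •
          contrMany k (fun i => Pi.single (g i) 1)
            ((volForm m).domDomCongr (finCongr (by omega : m = k + (m - k))))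
  else 0

/-- The Hodge star `⋆_{ℝ^m}` applied pointwise to ambient forms. -/
def starR (m k : ℕ) (α : Form m k) : Form m (m - k) := fun x => starAlt m k (α x)

/-- The wedge product of alternating tensors. -/
def wedgeAlt {m k l : ℕ} (α : (Vec m) [⋀^Fin k]→ₗ[ℝ] ℝ) (β : (Vec m) [⋀^Fin l]→ₗ[ℝ] ℝ) :
    (Vec m) [⋀^Fin (k + l)]→ₗ[ℝ] ℝ :=
  ((TensorProduct.lid ℝ ℝ).toLinearMap.compAlternatingMap (α.domCoprod β)).domDomCongr
    finSumFinEquiv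

/-- The conormal `ν = Σ uᵢ duᵢ` at `u`, as an alternating 1-tensor. -/
def nuForm (m : ℕ) (u : Vec m) : (Vec m) [⋀^Fin 1]→ₗ[ℝ] ℝ :=
  AlternatingMap.ofSubsingleton ℝ (Vec m) ℝ (0 : Fin 1) (dotLin m u)

/-- The extended Hodge star `⋆_{S^{m-1}} α := ⋆_{ℝ^m}(ν ∧ α)` on ambient forms. -/
def starSphAmb (m k : ℕ) (α : Form m k) : Form m (m - (1 + k)) :=
  fun x => starAlt m (1 + k) (wedgeAlt (nuForm m x) (α x))

/-- The Hodge star of a form on the sphere (w.r.t. the round metric and the orientation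
induced by the outward normal), computed as the restriction of `⋆_{ℝ^m}(ν ∧ ·)`. -/
def starSph (m k : ℕ) (α : FormOn m (sphereSet m) k) :
    FormOn m (sphereSet m) (m - (1 + k)) :=
  fun u => (starAlt m (1 + k) (wedgeAlt (nuForm m u.1) (α u))).compLinearMap (projSph m u.1)

/-- Re-indexing a form along an equality of form degrees. -/
def castForm {m k l : ℕ} (h : k = l) (α : Form m k) : Form m l :=
  fun x => (α x).domDomCongr (finCongr h)

/-- Re-indexing a form on a subset along an equality of form degrees. -/
def castFormOn {m : ℕ} {M : Set (Vec m)} {k l : ℕ} (h : k = l) (α : FormOn m M k) :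
    FormOn m M l :=
  fun x => (α x).domDomCongr (finCongr h)

/-- Trace on the boundary of the simplex vanishes: at every boundary point (a point of some
face `xᵢ = 0`), the form vanishes on vectors tangent to that face. -/
def vanishBdry (m k : ℕ) (a : FormOn m (simplexSet m) k) : Prop :=
  ∀ (x : simplexSet m) (i : Fin m), x.1 i = 0 →
    ∀ v : Fin k → Vec m, (∀ j, (∑ l, v j l) = 0 ∧ v j i = 0) → a x v = 0

/-- `P̊_rΛ^k(T^{m-1})`: forms in `P_rΛ^k(T^{m-1})` with vanishing trace on the boundary. -/
def PLosim (m k : ℕ) (r : ℤ) : Set (FormOn m (simplexSet m) k) :=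
  {a ∈ PLsim m k r | vanishBdry m k a}

/-- `P̊_r⁻Λ^k(T^{m-1})`. -/
def PLmosim (m k : ℕ) (r : ℤ) : Set (FormOn m (simplexSet m) k) :=
  {a ∈ PLmsim m k r | vanishBdry m k a}

/-- A form on the sphere vanishes (as an alternating tensor on the tangent space)
at every point of `S^{m-1} ∩ Γ`, where `Γ = ∪ᵢ {uᵢ = 0}`. -/
def zeroOnGammaSph (m k : ℕ) (α : FormOn m (sphereSet m) k) : Prop :=
  ∀ u : sphereSet m, (∃ i, u.1 i = 0) →
    ∀ v : Fin k → Vec m, (∀ j, ∑ l, u.1 l * v j l = 0) → α u v = 0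

/-- An ambient form vanishes (as an alternating tensor) at every point of `Γ`. -/
def zeroOnGammaAmb (m k : ℕ) (α : Form m k) : Prop :=
  ∀ u : Vec m, (∃ i, u i = 0) → α u = 0

/-- The wedge product of forms on a subset. -/
def wedgeOn {m : ℕ} {M : Set (Vec m)} {k l : ℕ} (a : FormOn m M k) (b : FormOn m M l) :
    FormOn m M (k + l) :=
  fun x => wedgeAlt (a x) (b x)

/-- The base region of the parametrization of the simplex. -/
def baseSimplex (n : ℕ) : Set (Fin n → ℝ) := {y | (∀ j, 0 ≤ y j) ∧ ∑ j, y j ≤ 1}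

/-- Parametrization `y ↦ (1 - Σy, y)` of `T^n` over the base region. -/
def simplexParam (n : ℕ) (y : Fin n → ℝ) : Vec (n + 1) := Fin.cons (1 - ∑ j, y j) y

lemma simplexParam_mem {n : ℕ} {y : Fin n → ℝ} (h : y ∈ baseSimplex n) :
    simplexParam n y ∈ simplexSet (n + 1) := by
  constructor
  · intro i
    refine Fin.cases ?_ ?_ i
    · simpa [simplexParam] using sub_nonneg.mpr h.2
    · intro j; simpa [simplexParam] using h.1 j
  · simp [simplexParam, Fin.sum_cons]

/-- The coordinate tangent vectors `∂x/∂y_j = e_{j+1} - e_0` of the parametrization,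
a positively oriented frame for the orientation of `T^n` induced from the outward-normal
orientation of `S^n` via `Φ`. -/
def simplexTangent (n : ℕ) (j : Fin n) : Vec (n + 1) :=
  Fin.cons (-1) (Pi.single j 1)

open Classical in
/-- The integral of an `n`-form over the oriented simplex `T^n`. -/
def integralSimplex (n : ℕ) (ω : FormOn (n + 1) (simplexSet (n + 1)) n) : ℝ :=
  ∫ y : Fin n → ℝ,
    if h : y ∈ baseSimplex n then ω ⟨simplexParam n y, simplexParam_mem h⟩ (simplexTangent n)
    else 0

/-- Forms on a subset that genuinely are pullbacks to the simplex: they vanish in the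
normal directions (canonical representatives). -/
def TangentialSim (m k : ℕ) (a : FormOn m (simplexSet m) k) : Prop :=
  ∀ x, (a x).compLinearMap (projSim m) = a x

/-- Continuity of a form on a subset. -/
def ContFormOn (m : ℕ) (M : Set (Vec m)) (k : ℕ) (a : FormOn m M k) : Prop :=
  ∀ v : Fin k → Vec m, Continuous fun x : M => a x v

/-- The Riemannian volume form of the round sphere `S^{m-1}` (outward-normal orientation),
i.e. the restriction of `⋆_{ℝ^m} ν`. -/
def volSph (m : ℕ) : FormOn m (sphereSet m) (m - 1) :=
  fun u => (starAlt m 1 (nuForm m u.1)).compLinearMap (projSph m u.1)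


section Aux
open MvPolynomial

variable {m : ℕ}

lemma altSum_apply {k : ℕ} {ι : Type*} (t : Finset ι) (f : ι → ((Vec m) [⋀^Fin k]→ₗ[ℝ] ℝ))
    (v : Fin k → Vec m) : (∑ i ∈ t, f i) v = ∑ i ∈ t, f i v := by
  classical
  induction t using Finset.induction_on with
  | empty => simp
  | insert a s h ih => simp [Finset.sum_insert h, ih]

lemma vec_single_expand (w : Vec m) : w = ∑ i : Fin m, w i • (Pi.single i 1 : Vec m) := by
  funext l
  rw [Finset.sum_apply]
  simp [Pi.single_apply]

lemma alt_expand {j : ℕ} (F : (Vec m) [⋀^Fin j]→ₗ[ℝ] ℝ) (v : Fin j → Vec m) :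
    F v = ∑ g : Fin j → Fin m, (∏ a, v a (g a)) • F (fun a => Pi.single (g a) 1) := by
  have h0 : F v = F (fun a => ∑ i : Fin m, v a i • (Pi.single i 1 : Vec m)) := by
    congr 1; funext a; exact vec_single_expand (v a)
  rw [h0]
  rw [show (F (fun a => ∑ i : Fin m, v a i • (Pi.single i 1 : Vec m)))
      = F.toMultilinearMap (fun a => ∑ i : Fin m, v a i • (Pi.single i 1 : Vec m)) from rfl,
    F.toMultilinearMap.map_sum (fun a i => v a i • (Pi.single i 1 : Vec m))]
  refine Finset.sum_congr rfl fun g _ => ?_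
  exact F.toMultilinearMap.map_smul_univ (fun a => v a (g a)) (fun a => Pi.single (g a) 1)

lemma finsuppDegSum (d : Fin m →₀ ℕ) : (d.sum fun _ e => e) = ∑ i : Fin m, d i :=
  Finsupp.sum_fintype _ _ (fun _ => rfl)

lemma degLE_iff {s : ℕ} {p : MvPolynomial (Fin m) ℝ} :
    degLE (s : ℤ) p ↔ p.totalDegree ≤ s := by
  constructor
  · intro h
    exact Finset.sup_le fun d hd => by exact_mod_cast h d hd
  · intro h d hd
    exact_mod_cast le_trans (Int.ofNat_le.mpr (MvPolynomial.le_totalDegree hd)) (Int.ofNat_le.mpr h)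

lemma mem_PL_iff {j s : ℕ} {z : ℤ} (hz : z = (s : ℤ)) {F : Form m j} :
    F ∈ PL m j z ↔ ∀ v : Fin j → Vec m, ∃ p : MvPolynomial (Fin m) ℝ,
      p.totalDegree ≤ s ∧ ∀ x, F x v = MvPolynomial.eval x p := by
  subst hz
  unfold PL
  simp only [Set.mem_setOf_eq, degLE_iff]

/-- coefficient family of a polynomial form -/
lemma PL_coeffs {j s : ℕ} {F : Form m j}
    (hF : ∀ v : Fin j → Vec m, ∃ p : MvPolynomial (Fin m) ℝ,
      p.totalDegree ≤ s ∧ ∀ x, F x v = MvPolynomial.eval x p) :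
    ∃ p : (Fin j → Fin m) → MvPolynomial (Fin m) ℝ,
      (∀ g, (p g).totalDegree ≤ s) ∧
      (∀ x (g : Fin j → Fin m), F x (fun a => Pi.single (g a) 1) = MvPolynomial.eval x (p g)) := by
  choose p hdeg hval using hF
  exact ⟨fun g => p (fun a => Pi.single (g a) 1), fun g => hdeg _, fun x g => hval _ x⟩

lemma totalDegree_sum_smul_le {ι : Type*} (t : Finset ι) (c : ι → ℝ)
    (p : ι → MvPolynomial (Fin m) ℝ) {s : ℕ} (h : ∀ i ∈ t, (p i).totalDegree ≤ s) :
    (∑ i ∈ t, c i • p i).totalDegree ≤ s :=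
  le_trans (MvPolynomial.totalDegree_finset_sum _ _) <| Finset.sup_le fun i hi =>
    le_trans (MvPolynomial.totalDegree_smul_le _ _) (h i hi)

lemma eval_sum_smul {ι : Type*} (t : Finset ι) (c : ι → ℝ) (p : ι → MvPolynomial (Fin m) ℝ)
    (x : Vec m) : MvPolynomial.eval x (∑ i ∈ t, c i • p i) = ∑ i ∈ t, c i * MvPolynomial.eval x (p i) := by
  rw [map_sum]
  exact Finset.sum_congr rfl fun i _ => MvPolynomial.smul_eval _ _ _

def sqP (m : ℕ) : Fin m → MvPolynomial (Fin m) ℝ := fun i => X i ^ 2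

lemma eval_bind (f : Fin m → MvPolynomial (Fin m) ℝ) (p : MvPolynomial (Fin m) ℝ) (u : Vec m) :
    MvPolynomial.eval u (bind₁ f p) = MvPolynomial.eval (fun i => MvPolynomial.eval u (f i)) p := by
  exact eval₂Hom_bind₁ (RingHom.id ℝ) u f p

lemma eval_sqBind (p : MvPolynomial (Fin m) ℝ) (u : Vec m) :
    MvPolynomial.eval u (bind₁ (sqP m) p) = MvPolynomial.eval (Phi m u) p := by
  rw [eval_bind]
  have : (fun i => MvPolynomial.eval u (sqP m i)) = Phi m u := by
    funext i; simp [sqP, Phi]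
  rw [this]

lemma totalDegree_bind_le (f : Fin m → MvPolynomial (Fin m) ℝ) (t : ℕ)
    (hf : ∀ i, (f i).totalDegree ≤ t) (p : MvPolynomial (Fin m) ℝ) :
    (bind₁ f p).totalDegree ≤ t * p.totalDegree := by
  conv_lhs => rw [MvPolynomial.as_sum p]
  rw [map_sum]
  refine le_trans (MvPolynomial.totalDegree_finset_sum _ _) (Finset.sup_le fun d hd => ?_)
  rw [bind₁_monomial]
  refine le_trans (MvPolynomial.totalDegree_mul _ _) ?_
  rw [MvPolynomial.totalDegree_C, zero_add]
  refine le_trans (MvPolynomial.totalDegree_finset_prod _ _) ?_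
  have h1 : ∀ i ∈ d.support, (f i ^ d i).totalDegree ≤ d i * t := fun i _ =>
    le_trans (MvPolynomial.totalDegree_pow _ _) (Nat.mul_le_mul_left _ (hf i))
  refine le_trans (Finset.sum_le_sum h1) ?_
  rw [← Finset.sum_mul]
  have h2 : (∑ i ∈ d.support, d i) ≤ p.totalDegree := by
    have := MvPolynomial.le_totalDegree hd
    rwa [Finsupp.sum] at this
  calc (∑ i ∈ d.support, d i) * t ≤ p.totalDegree * t := Nat.mul_le_mul_right _ h2
    _ = t * p.totalDegree := Nat.mul_comm _ _

lemma totalDegree_sqBind_le (p : MvPolynomial (Fin m) ℝ) :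
    (bind₁ (sqP m) p).totalDegree ≤ 2 * p.totalDegree :=
  totalDegree_bind_le _ 2 (fun i => le_trans (MvPolynomial.totalDegree_pow _ _)
    (by simp [MvPolynomial.totalDegree_X])) p

end Aux
section Aux2
open MvPolynomial

variable {m : ℕ}

/-- sign flip function indexed by a finset -/
def sgnF (s : Finset (Fin m)) (u : Vec m) : Vec m := fun j => if j ∈ s then -u j else u j

def sgnL (s : Finset (Fin m)) : Vec m →ₗ[ℝ] Vec m :=
  LinearMap.pi fun j => if j ∈ s then -LinearMap.proj j else LinearMap.proj j

def sgnP (s : Finset (Fin m)) : Fin m → MvPolynomial (Fin m) ℝ :=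
  fun i => if i ∈ s then -X i else X i

lemma sgnL_apply (s : Finset (Fin m)) (v : Vec m) : sgnL s v = sgnF s v := by
  funext j
  simp only [sgnL, sgnF, LinearMap.pi_apply]
  split <;> simp [LinearMap.proj]

lemma eval_sgnBind (s : Finset (Fin m)) (p : MvPolynomial (Fin m) ℝ) (u : Vec m) :
    MvPolynomial.eval u (bind₁ (sgnP s) p) = MvPolynomial.eval (sgnF s u) p := by
  rw [eval_bind]
  have : (fun i => MvPolynomial.eval u (sgnP s i)) = sgnF s u := by
    funext i; simp only [sgnP, sgnF]; split <;> simp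
  rw [this]

lemma totalDegree_sgnBind_le (s : Finset (Fin m)) (p : MvPolynomial (Fin m) ℝ) :
    (bind₁ (sgnP s) p).totalDegree ≤ p.totalDegree := by
  have := totalDegree_bind_le (sgnP s) 1 (fun i => by
    simp only [sgnP]; split
    · rw [MvPolynomial.totalDegree_neg, MvPolynomial.totalDegree_X]
    · rw [MvPolynomial.totalDegree_X]) p
  simpa using this

lemma monomial_eq_univ (d : Fin m →₀ ℕ) (c : ℝ) :
    monomial d c = C c * ∏ i : Fin m, X i ^ d i := by
  rw [monomial_eq]
  congr 1
  rw [Finsupp.prod]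
  exact Finset.prod_subset (Finset.subset_univ _) (fun i _ hi => by
    rw [Finsupp.notMem_support_iff.mp hi, pow_zero])

set_option maxRecDepth 4000 in
lemma bind_sgn_monomial (s : Finset (Fin m)) (d : Fin m →₀ ℕ) (c : ℝ) :
    bind₁ (sgnP s) (monomial d c) = (∏ i ∈ s, (-1 : ℝ) ^ d i) • monomial d c := by
  rw [bind₁_monomial]
  have h1 : ∀ i, sgnP s i ^ d i = C ((if i ∈ s then (-1:ℝ) else 1) ^ d i) * X i ^ d i := by
    intro i
    by_cases hi : i ∈ s
    · rw [show sgnP s i = C (-1 : ℝ) * X i by simp [sgnP, if_pos hi], mul_pow, ← map_pow,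
        if_pos hi]
    · simp [sgnP, hi]
  have e1 : ∏ i ∈ d.support, (if i ∈ s then (-1:ℝ) else 1) ^ d i
      = ∏ i : Fin m, (if i ∈ s then (-1:ℝ) else 1) ^ d i :=
    Finset.prod_subset (Finset.subset_univ _) (fun i _ hi => by
      rw [Finsupp.notMem_support_iff.mp hi, pow_zero])
  have e2 : ∏ i : Fin m, (if i ∈ s then (-1:ℝ) else 1) ^ d i = ∏ i ∈ s, (-1 : ℝ) ^ d i := by
    rw [Finset.prod_congr rfl (fun i _ => show (if i ∈ s then (-1:ℝ) else 1) ^ d i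
        = if i ∈ s then (-1:ℝ) ^ d i else 1 by split <;> simp),
      Finset.prod_ite_mem, Finset.univ_inter]
  calc C c * ∏ i ∈ d.support, sgnP s i ^ d i
      = C c * ∏ i ∈ d.support, (C ((if i ∈ s then (-1:ℝ) else 1) ^ d i) * X i ^ d i) := by
        rw [Finset.prod_congr rfl fun i _ => h1 i]
    _ = C ((∏ i ∈ d.support, (if i ∈ s then (-1:ℝ) else 1) ^ d i)) * (C c * ∏ i ∈ d.support, X i ^ d i) := by
        rw [Finset.prod_mul_distrib, map_prod]; ring
    _ = (∏ i ∈ s, (-1 : ℝ) ^ d i) • monomial d c := by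
        rw [e1, e2, monomial_eq, Finsupp.prod, smul_eq_C_mul]

lemma coeff_sgnBind (s : Finset (Fin m)) (p : MvPolynomial (Fin m) ℝ) (e : Fin m →₀ ℕ) :
    coeff e (bind₁ (sgnP s) p) = (∏ i ∈ s, (-1 : ℝ) ^ e i) * coeff e p := by
  conv_lhs => rw [MvPolynomial.as_sum p]
  rw [map_sum, MvPolynomial.coeff_sum]
  rw [Finset.sum_congr rfl (fun d _ => by rw [bind_sgn_monomial, MvPolynomial.coeff_smul,
    MvPolynomial.coeff_monomial])]
  by_cases he : e ∈ p.support
  · rw [Finset.sum_eq_single e]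
    · simp
    · intro d _ hd
      simp [hd]
    · intro h; exact absurd he h
  · rw [Finset.sum_eq_zero, MvPolynomial.notMem_support_iff.mp he, mul_zero]
    intro d hd
    have : ¬ (d = e) := fun h => he (h ▸ hd)
    simp [this]

/-- Parity decomposition of a polynomial whose monomials are odd exactly in the variables of `I`. -/
lemma even_decomp {s : ℕ} (p : MvPolynomial (Fin m) ℝ) (I : Finset (Fin m))
    (hdeg : p.totalDegree ≤ s)
    (hpar : ∀ d ∈ p.support, ∀ i : Fin m, (i ∈ I ↔ Odd (d i))) :
    ∃ q : MvPolynomial (Fin m) ℝ,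
      ((∏ i ∈ I, X i) * bind₁ (sqP m) q = p) ∧
      (∀ e ∈ q.support, 2 * (e.sum fun _ x => x) + I.card ≤ s) := by
  classical
  set hf : (Fin m →₀ ℕ) → (Fin m →₀ ℕ) := fun d => Finsupp.mapRange (· / 2) (by norm_num) d with hfdef
  refine ⟨∑ d ∈ p.support, monomial (hf d) (coeff d p), ?_, ?_⟩
  · rw [map_sum, Finset.mul_sum]
    conv_rhs => rw [MvPolynomial.as_sum p]
    refine Finset.sum_congr rfl fun d hd => ?_
    -- per-monomial identity
    have hbind : bind₁ (sqP m) (monomial (hf d) (coeff d p))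
        = C (coeff d p) * ∏ i : Fin m, X i ^ (2 * (d i / 2)) := by
      rw [bind₁_monomial]
      congr 1
      have e1 : ∏ i ∈ (hf d).support, sqP m i ^ (hf d) i
          = ∏ i : Fin m, sqP m i ^ (hf d) i :=
        Finset.prod_subset (Finset.subset_univ _) (fun i _ hi => by
          rw [Finsupp.notMem_support_iff.mp hi, pow_zero])
      rw [e1]
      refine Finset.prod_congr rfl fun i _ => ?_
      rw [show (hf d) i = d i / 2 from Finsupp.mapRange_apply, sqP, ← pow_mul]
    rw [hbind]
    have hXI : (∏ i ∈ I, X i : MvPolynomial (Fin m) ℝ)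
        = ∏ i : Fin m, X i ^ (if i ∈ I then 1 else 0) := by
      rw [Finset.prod_congr rfl (fun i _ => show (X i : MvPolynomial (Fin m) ℝ) ^ (if i ∈ I then 1 else 0)
          = if i ∈ I then X i else 1 by split <;> simp), Finset.prod_ite_mem, Finset.univ_inter]
    rw [hXI, monomial_eq_univ]
    rw [show (C (coeff d p) * ∏ i : Fin m, X i ^ (2 * (d i / 2)) : MvPolynomial (Fin m) ℝ)
      = C (coeff d p) * ∏ i : Fin m, X i ^ (2 * (d i / 2)) from rfl]
    have : ∀ i : Fin m, (if i ∈ I then 1 else 0) + 2 * (d i / 2) = d i := by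
      intro i
      by_cases hi : i ∈ I
      · have h1 : Odd (d i) := (hpar d hd i).mp hi
        rw [if_pos hi]; obtain ⟨j, hj⟩ := h1; omega
      · have h1 : Even (d i) := Nat.not_odd_iff_even.mp (fun h => hi ((hpar d hd i).mpr h))
        rw [if_neg hi]; obtain ⟨j, hj⟩ := h1; omega
    calc (∏ i : Fin m, X i ^ (if i ∈ I then 1 else 0)) * (C (coeff d p) * ∏ i : Fin m, X i ^ (2 * (d i / 2)))
        = C (coeff d p) * ∏ i : Fin m, (X i ^ (if i ∈ I then 1 else 0) * X i ^ (2 * (d i / 2))) := by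
          rw [Finset.prod_mul_distrib]; ring
      _ = C (coeff d p) * ∏ i : Fin m, X i ^ ((if i ∈ I then 1 else 0) + 2 * (d i / 2)) := by
          rw [Finset.prod_congr rfl fun i _ => (pow_add (X i) _ _).symm]
      _ = C (coeff d p) * ∏ i : Fin m, X i ^ d i := by
          rw [Finset.prod_congr rfl fun i _ => by rw [this i]]
  · intro e he
    obtain ⟨d, hd, hed⟩ := Finset.mem_biUnion.mp (MvPolynomial.support_sum he)
    have : e = hf d := by
      have := MvPolynomial.support_monomial (s := hf d) (a := coeff d p) ▸ hed
      split at this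
      · exact absurd this (Finset.notMem_empty e)
      · exact Finset.mem_singleton.mp this
    subst this
    have hsum : ((hf d).sum fun _ x => x) = ∑ i : Fin m, d i / 2 := by
      rw [finsuppDegSum]
      exact Finset.sum_congr rfl fun i _ => Finsupp.mapRange_apply
    have hcard : I.card = ∑ i : Fin m, (if i ∈ I then 1 else 0) := by
      rw [Finset.sum_ite_mem, Finset.univ_inter, Finset.card_eq_sum_ones]
    have hdi : ∀ i : Fin m, 2 * (d i / 2) + (if i ∈ I then 1 else 0) = d i := by
      intro i
      by_cases hi : i ∈ I
      · have h1 : Odd (d i) := (hpar d hd i).mp hi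
        rw [if_pos hi]; obtain ⟨j, hj⟩ := h1; omega
      · have h1 : Even (d i) := Nat.not_odd_iff_even.mp (fun h => hi ((hpar d hd i).mpr h))
        rw [if_neg hi]; obtain ⟨j, hj⟩ := h1; omega
    have hdegd : (∑ i : Fin m, d i) ≤ s := by
      have := MvPolynomial.le_totalDegree hd
      rw [finsuppDegSum] at this
      exact le_trans this hdeg
    rw [hsum, hcard]
    calc 2 * (∑ i : Fin m, d i / 2) + ∑ i : Fin m, (if i ∈ I then 1 else 0)
        = ∑ i : Fin m, (2 * (d i / 2) + (if i ∈ I then 1 else 0)) := by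
          rw [Finset.mul_sum, Finset.sum_add_distrib]
      _ = ∑ i : Fin m, d i := Finset.sum_congr rfl fun i _ => hdi i
      _ ≤ s := hdegd

end Aux2
section Aux3
open MvPolynomial

variable {m : ℕ}

/-- elementary alternating map `du_{g 0} ⊗ ... ` (determinant of selected coordinates) -/
def Eg {j : ℕ} (g : Fin j → Fin m) : (Vec m) [⋀^Fin j]→ₗ[ℝ] ℝ :=
  Matrix.detRowAlternating.compLinearMap (LinearMap.pi fun b => LinearMap.proj (g b))

lemma Eg_apply {j : ℕ} (g : Fin j → Fin m) (v : Fin j → Vec m) :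
    Eg g v = Matrix.det (Matrix.of fun a b => v a (g b)) := rfl

lemma alt_reconstruct {j : ℕ} (F : (Vec m) [⋀^Fin j]→ₗ[ℝ] ℝ) (v : Fin j → Vec m) :
    F v = ((j.factorial : ℝ))⁻¹ * ∑ g : Fin j → Fin m, F (fun a => Pi.single (g a) 1) * Eg g v := by
  have key : ∑ g : Fin j → Fin m, F (fun a => Pi.single (g a) 1) * Eg g v
      = (j.factorial : ℝ) * F v := by
    have expand : ∀ g : Fin j → Fin m, Eg g v
        = ∑ σ : Equiv.Perm (Fin j), ((Equiv.Perm.sign σ : ℤ) : ℝ) * ∏ b, v (σ b) (g b) := by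
      intro g
      rw [Eg_apply, Matrix.det_apply]
      refine Finset.sum_congr rfl fun σ _ => ?_
      rw [Units.smul_def, zsmul_eq_mul]
      norm_num
    calc ∑ g : Fin j → Fin m, F (fun a => Pi.single (g a) 1) * Eg g v
        = ∑ g : Fin j → Fin m, ∑ σ : Equiv.Perm (Fin j),
            ((Equiv.Perm.sign σ : ℤ) : ℝ) * (F (fun a => Pi.single (g a) 1) * ∏ b, v (σ b) (g b)) := by
          refine Finset.sum_congr rfl fun g _ => ?_
          rw [expand g, Finset.mul_sum]
          refine Finset.sum_congr rfl fun σ _ => by ring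
      _ = ∑ σ : Equiv.Perm (Fin j), ∑ g : Fin j → Fin m,
            ((Equiv.Perm.sign σ : ℤ) : ℝ) * (F (fun a => Pi.single (g a) 1) * ∏ b, v (σ b) (g b)) :=
          Finset.sum_comm
      _ = ∑ σ : Equiv.Perm (Fin j), ∑ h : Fin j → Fin m,
            (F (fun a => Pi.single (h a) 1) * ∏ b, v b (h b)) := by
          refine Finset.sum_congr rfl fun σ _ => ?_
          refine (Fintype.sum_bijective (fun h : Fin j → Fin m => h ∘ σ)
            ((Equiv.arrowCongr σ.symm (Equiv.refl (Fin m))).bijective) _ _ fun h => ?_).symm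
          -- show F(single∘h) * ∏ v b (h b) = sign σ * (F (single∘(h∘σ)) * ∏ v (σ b) (h (σ b)))
          have e1 : F (fun a => Pi.single ((h ∘ σ) a) 1)
              = Equiv.Perm.sign σ • F (fun a => Pi.single (h a) 1) :=
            F.map_perm (fun a => Pi.single (h a) 1) σ
          have e2 : ∏ b, v (σ b) ((h ∘ σ) b) = ∏ b, v b (h b) :=
            Equiv.prod_comp σ (fun b => v b (h b))
          rw [e1, e2, Units.smul_def, zsmul_eq_mul]
          rcases Int.units_eq_one_or (Equiv.Perm.sign σ) with hs | hs <;> rw [hs] <;> push_cast <;> ring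
      _ = (j.factorial : ℝ) * F v := by
          rw [Finset.sum_const, Finset.card_univ, Fintype.card_perm, Fintype.card_fin]
          rw [nsmul_eq_mul]
          congr 1
          rw [alt_expand F v]
          exact Finset.sum_congr rfl fun h _ => by rw [smul_eq_mul]; ring
  rw [key, inv_mul_cancel_left₀ (by positivity)]

-- geometry
lemma dotLin_apply (u v : Vec m) : dotLin m u v = ∑ i, u i * v i := by
  unfold dotLin
  rw [LinearMap.sum_apply]
  exact Finset.sum_congr rfl fun i _ => by simp [LinearMap.proj]

lemma projSph_apply (u v : Vec m) (i : Fin m) :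
    projSph m u v i = v i - (∑ l, u l * v l) * u i := by
  unfold projSph
  simp [LinearMap.smulRight, dotLin_apply]

lemma projSim_apply (v : Vec m) (i : Fin m) :
    projSim m v i = v i - (m : ℝ)⁻¹ * ∑ l, v l := by
  unfold projSim sumLin
  simp only [LinearMap.sub_apply, LinearMap.id_apply, LinearMap.smulRight_apply,
    LinearMap.smul_apply, LinearMap.sum_apply]
  have : (∑ i : Fin m, (LinearMap.proj i : Vec m →ₗ[ℝ] ℝ)) v = ∑ l, v l := by
    rw [LinearMap.sum_apply]
    exact Finset.sum_congr rfl fun l _ => rfl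
  simp only [Pi.sub_apply, Pi.smul_apply, smul_eq_mul]
  simp [LinearMap.proj]

lemma dPhi_apply (u v : Vec m) (i : Fin m) : dPhi m u v i = 2 * u i * v i := by
  unfold dPhi
  simp [LinearMap.pi_apply, LinearMap.proj]

lemma reflLin_apply (i : Fin m) (v : Vec m) : reflLin m i v = reflFun m i v := by
  funext j
  simp only [reflLin, reflFun, LinearMap.pi_apply]
  split <;> simp [LinearMap.proj]

lemma projSim_fix {v : Vec m} (h : ∑ i, v i = 0) : projSim m v = v := by
  funext i
  rw [projSim_apply, h, mul_zero, sub_zero]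

lemma sum_dPhi_projSph {u : Vec m} (hu : u ∈ sphereSet m) (v : Vec m) :
    ∑ i, dPhi m u (projSph m u v) i = 0 := by
  have hs : ∑ i, u i ^ 2 = 1 := hu
  have : ∀ i, dPhi m u (projSph m u v) i
      = 2 * (u i * v i) - 2 * (∑ l, u l * v l) * u i ^ 2 := by
    intro i
    rw [dPhi_apply, projSph_apply]
    ring
  rw [Finset.sum_congr rfl fun i _ => this i, Finset.sum_sub_distrib, ← Finset.mul_sum,
    ← Finset.mul_sum, hs]
  ring

lemma sum_projSim_zero (hm : (m : ℝ) ≠ 0) (v : Vec m) : ∑ i, projSim m v i = 0 := by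
  rw [Finset.sum_congr rfl fun i _ => projSim_apply v i, Finset.sum_sub_distrib,
    Finset.sum_const, Finset.card_univ, Fintype.card_fin, nsmul_eq_mul]
  field_simp
  ring

end Aux3
section Aux4
open MvPolynomial

variable {m : ℕ}

lemma simplex_limit {q : MvPolynomial (Fin m) ℝ} {x c : Vec m}
    (h : ∀ t : ℝ, 0 < t → t ≤ 1 → MvPolynomial.eval ((1 - t) • x + t • c) q = 0) :
    MvPolynomial.eval x q = 0 := by
  have hcont : Continuous fun t : ℝ => MvPolynomial.eval ((1 - t) • x + t • c) q :=
    (MvPolynomial.continuous_eval q).comp (by continuity)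
  have ht : Filter.Tendsto (fun n : ℕ => (1 : ℝ) / (n + 1)) Filter.atTop (nhds 0) :=
    tendsto_one_div_add_atTop_nhds_zero_nat
  have h2 : Filter.Tendsto
      (fun n : ℕ => MvPolynomial.eval ((1 - 1/((n:ℝ)+1)) • x + (1/((n:ℝ)+1)) • c) q)
      Filter.atTop (nhds (MvPolynomial.eval ((1 - (0:ℝ)) • x + (0:ℝ) • c) q)) :=
    (hcont.tendsto 0).comp ht
  have h3 : ∀ n : ℕ, MvPolynomial.eval ((1 - 1/((n:ℝ)+1)) • x + (1/((n:ℝ)+1)) • c) q = 0 := by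
    intro n
    refine h _ (by positivity) ?_
    rw [div_le_one (by positivity)]
    linarith [Nat.cast_nonneg (α := ℝ) n]
  rw [Filter.tendsto_congr h3] at h2
  have h4 := tendsto_nhds_unique h2 tendsto_const_nhds
  simpa using h4

lemma phiPullTS_resSim {k : ℕ} (δ : Form m k) (u : sphereSet m) (v : Fin k → Vec m) :
    phiPullTS m k (resSim m k δ) u v
      = δ (Phi m u.1) (fun j => dPhi m u.1 (projSph m u.1 (v j))) := by
  unfold phiPullTS resSim
  rw [AlternatingMap.compLinearMap_apply, AlternatingMap.compLinearMap_apply]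
  congr 1
  funext j
  rw [LinearMap.comp_apply]
  exact projSim_fix (sum_dPhi_projSph u.2 _)

lemma iU_apply {k : ℕ} (β : Form m (k+1)) (u : Vec m) (v : Fin k → Vec m) :
    iU β u v = β u (Matrix.vecCons u v) := rfl

lemma dPhi_cons (u w : Vec m) {k : ℕ} (v : Fin k → Vec m) :
    (fun a => dPhi m u (Matrix.vecCons w v a))
      = Matrix.vecCons (dPhi m u w) (fun j => dPhi m u (v j)) := by
  funext a
  refine Fin.cases ?_ ?_ a <;> simp

lemma dPhi_self (u : Vec m) : dPhi m u u = (2:ℝ) • Phi m u := by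
  funext i
  rw [dPhi_apply]
  simp [Phi]
  ring

lemma alt_cons_smul {k : ℕ} (G : (Vec m) [⋀^Fin (k+1)]→ₗ[ℝ] ℝ) (c : ℝ) (w : Vec m)
    (v : Fin k → Vec m) :
    G (Matrix.vecCons (c • w) v) = c * G (Matrix.vecCons w v) := by
  calc G (Matrix.vecCons (c • w) v) = (G.curryLeft (c • w)) v := rfl
    _ = (c • G.curryLeft w) v := by rw [_root_.map_smul]
    _ = c * G (Matrix.vecCons w v) := rfl

lemma phiPull_mem_PL {j s : ℕ} {β : Form m j}
    (hβ : ∀ v, ∃ p : MvPolynomial (Fin m) ℝ, p.totalDegree ≤ s ∧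
      ∀ x, β x v = MvPolynomial.eval x p) (c : ℝ) :
    ∀ v, ∃ p : MvPolynomial (Fin m) ℝ, p.totalDegree ≤ 2*s + j ∧
      ∀ u, (c • phiPull m j β) u v = MvPolynomial.eval u p := by
  obtain ⟨p, hdeg, hval⟩ := PL_coeffs hβ
  intro v
  refine ⟨∑ g : Fin j → Fin m, (c * ∏ a, (2 * v a (g a))) •
      ((∏ a, X (g a)) * bind₁ (sqP m) (p g)), ?_, ?_⟩
  · refine totalDegree_sum_smul_le _ _ _ fun g _ => ?_
    have h0 := MvPolynomial.totalDegree_mul (∏ a, (X (g a)) : MvPolynomial (Fin m) ℝ)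
      (bind₁ (sqP m) (p g))
    have h1 : (∏ a : Fin j, (X (g a) : MvPolynomial (Fin m) ℝ)).totalDegree ≤ j := by
      refine le_trans (MvPolynomial.totalDegree_finset_prod _ _) ?_
      rw [Finset.sum_congr rfl fun a _ => MvPolynomial.totalDegree_X (g a)]
      simp
    have h2 := totalDegree_sqBind_le (p g)
    have h3 := hdeg g
    omega
  · intro u
    have e0 : (c • phiPull m j β) u v = c * β (Phi m u) (fun a => dPhi m u (v a)) := by
      simp [phiPull, AlternatingMap.compLinearMap_apply]
    rw [e0, alt_expand (β (Phi m u)) _, eval_sum_smul, Finset.mul_sum]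
    refine Finset.sum_congr rfl fun g _ => ?_
    rw [smul_eq_mul, hval (Phi m u) g, eval_mul, map_prod, eval_sqBind]
    have e1 : ∏ a, dPhi m u (v a) (g a) = (∏ a, (2 * v a (g a))) * ∏ a, u (g a) := by
      rw [← Finset.prod_mul_distrib]
      exact Finset.prod_congr rfl fun a _ => by rw [dPhi_apply]; ring
    rw [e1]
    rw [Finset.prod_congr rfl fun a (_ : a ∈ Finset.univ) => MvPolynomial.eval_X (f := u) (g a)]
    ring

lemma iU_mem_PL {k s : ℕ} {β : Form m (k+1)}
    (hβ : ∀ v, ∃ p : MvPolynomial (Fin m) ℝ, p.totalDegree ≤ s ∧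
      ∀ x, β x v = MvPolynomial.eval x p) :
    ∀ v : Fin k → Vec m, ∃ p : MvPolynomial (Fin m) ℝ, p.totalDegree ≤ s + 1 ∧
      ∀ x, iU β x v = MvPolynomial.eval x p := by
  obtain ⟨p, hdeg, hval⟩ := PL_coeffs hβ
  intro v
  refine ⟨∑ g : Fin (k+1) → Fin m, (∏ a : Fin k, v a (g a.succ)) • (X (g 0) * p g), ?_, ?_⟩
  · refine totalDegree_sum_smul_le _ _ _ fun g _ => ?_
    have h0 := MvPolynomial.totalDegree_mul (X (g 0) : MvPolynomial (Fin m) ℝ) (p g)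
    have hx : (X (g 0) : MvPolynomial (Fin m) ℝ).totalDegree = 1 := MvPolynomial.totalDegree_X _
    have h1 := hdeg g
    omega
  · intro x
    rw [iU_apply, alt_expand (β x) (Matrix.vecCons x v), eval_sum_smul]
    refine Finset.sum_congr rfl fun g _ => ?_
    rw [smul_eq_mul, hval x g, eval_mul, eval_X, Fin.prod_univ_succ]
    simp only [Matrix.cons_val_zero, Matrix.cons_val_succ]
    ring

lemma sqrt_sphere {x : Vec m} (hx : x ∈ simplexSet m) :
    (fun i => Real.sqrt (x i)) ∈ sphereSet m ∧ Phi m (fun i => Real.sqrt (x i)) = x := by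
  constructor
  · show ∑ i, Real.sqrt (x i) ^ 2 = 1
    rw [Finset.sum_congr rfl fun i _ => Real.sq_sqrt (hx.1 i)]
    exact hx.2
  · funext i
    exact Real.sq_sqrt (hx.1 i)

end Aux4
section Aux5
open MvPolynomial

variable {m : ℕ}

def sPull (k : ℕ) (s : Finset (Fin m)) (β : Form m k) : Form m k :=
  fun u => (β (sgnF s u)).compLinearMap (sgnL s)

lemma sgnF_mem_sphere (s : Finset (Fin m)) {u : Vec m} (hu : u ∈ sphereSet m) :
    sgnF s u ∈ sphereSet m := by
  show ∑ i, sgnF s u i ^ 2 = 1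
  rw [Finset.sum_congr rfl fun i _ => show sgnF s u i ^ 2 = u i ^ 2 by
    simp only [sgnF]; split <;> ring]
  exact hu

def sPullSph (k : ℕ) (s : Finset (Fin m)) (α : FormOn m (sphereSet m) k) :
    FormOn m (sphereSet m) k :=
  fun u => (α ⟨sgnF s u.1, sgnF_mem_sphere s u.2⟩).compLinearMap (sgnL s)

lemma Phi_sgnF (s : Finset (Fin m)) (u : Vec m) : Phi m (sgnF s u) = Phi m u := by
  funext i
  simp only [Phi, sgnF]
  split <;> ring

lemma sgn_dot (s : Finset (Fin m)) (u v : Vec m) :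
    ∑ l, sgnF s u l * sgnF s v l = ∑ l, u l * v l := by
  refine Finset.sum_congr rfl fun l _ => ?_
  simp only [sgnF]
  split <;> ring

lemma sgnF_empty (u : Vec m) : sgnF (∅ : Finset (Fin m)) u = u := by
  funext j; simp [sgnF]

lemma reflFun_sgnF (i : Fin m) (u : Vec m) : reflFun m i u = sgnF {i} u := by
  funext j; simp [reflFun, sgnF]

lemma sgnF_comp (s t : Finset (Fin m)) (u : Vec m) :
    sgnF s (sgnF t u) = sgnF (symmDiff s t) u := by
  funext j
  simp only [sgnF, Finset.mem_symmDiff]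
  by_cases hs : j ∈ s <;> by_cases ht : j ∈ t <;> simp [hs, ht]

lemma sgnL_projSph (s : Finset (Fin m)) (u v : Vec m) :
    sgnL s (projSph m u v) = projSph m (sgnF s u) (sgnL s v) := by
  rw [sgnL_apply, sgnL_apply]
  funext j
  rw [projSph_apply, sgn_dot]
  simp only [sgnF]
  rw [projSph_apply]
  split <;> ring

lemma formOn_congr {M : Set (Vec m)} {k : ℕ} (a : FormOn m M k) {x y : M} (h : x.1 = y.1) :
    a x = a y := by
  cases x; cases y; cases Subtype.ext h; rfl

lemma formOn_apply_congr {M : Set (Vec m)} {k : ℕ} (a : FormOn m M k) {x y : M}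
    (h : x.1 = y.1) {v w : Fin k → Vec m} (hv : v = w) : a x v = a y w := by
  cases x; cases y; cases Subtype.ext h; cases hv; rfl

lemma resSph_sPull {k : ℕ} (G : Form m k) (s : Finset (Fin m)) :
    resSph m k (sPull k s G) = sPullSph k s (resSph m k G) := by
  funext u; ext v
  simp only [resSph, sPull, sPullSph, AlternatingMap.compLinearMap_apply]
  congr 1
  funext a
  exact sgnL_projSph s u.1 (v a)

lemma reflPull_sPull {k : ℕ} (i : Fin m) (s : Finset (Fin m)) (G : Form m k) :
    reflPull m k i (sPull k s G) = sPull k (symmDiff s {i}) G := by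
  funext u; ext v
  simp only [reflPull, sPull, AlternatingMap.compLinearMap_apply]
  rw [show sgnF s (reflFun m i u) = sgnF (symmDiff s {i}) u by
    rw [reflFun_sgnF, sgnF_comp]]
  congr 1
  funext a
  rw [sgnL_apply, reflLin_apply, reflFun_sgnF, sgnF_comp, sgnL_apply]

lemma iU_sPull {k : ℕ} (s : Finset (Fin m)) (β : Form m (k+1)) :
    iU (sPull (k+1) s β) = sPull k s (iU β) := by
  funext u; ext v
  rw [show iU (sPull (k+1) s β) u v = sPull (k+1) s β u (Matrix.vecCons u v) from rfl]
  simp only [sPull, AlternatingMap.compLinearMap_apply, iU_apply]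
  congr 1
  funext a
  refine Fin.cases ?_ ?_ a
  · simp [sgnL_apply]
  · intro b; simp [sgnL_apply]

lemma sPullSph_even {k : ℕ} {α : FormOn m (sphereSet m) k} (he : IsEvenSph m k α) :
    ∀ s : Finset (Fin m), sPullSph k s α = α := by
  intro s
  classical
  induction s using Finset.induction_on with
  | empty =>
    funext u; ext v
    simp only [sPullSph, AlternatingMap.compLinearMap_apply]
    refine formOn_apply_congr α (sgnF_empty u.1) ?_
    funext a
    rw [sgnL_apply, sgnF_empty]
  | insert i s hi ih =>
    funext u; ext v
    have hsd : symmDiff s {i} = insert i s := by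
      ext j
      rw [Finset.mem_symmDiff]
      simp only [Finset.mem_singleton, Finset.mem_insert]
      constructor
      · rintro (⟨h1, h2⟩ | ⟨h1, h2⟩)
        · exact Or.inr h1
        · exact Or.inl h1
      · rintro (rfl | h1)
        · exact Or.inr ⟨rfl, hi⟩
        · exact Or.inl ⟨h1, fun h => hi (h ▸ h1)⟩
    calc sPullSph k (insert i s) α u v
        = sPullSph k s α ⟨reflFun m i u.1, refl_mem_sphere u.2⟩ (fun a => reflLin m i (v a)) := by
          simp only [sPullSph, AlternatingMap.compLinearMap_apply]
          refine formOn_apply_congr α ?_ ?_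
          · show sgnF (insert i s) u.1 = sgnF s (reflFun m i u.1)
            rw [reflFun_sgnF, sgnF_comp, hsd]
          · funext a
            rw [sgnL_apply, sgnL_apply, reflLin_apply, reflFun_sgnF, sgnF_comp, hsd]
      _ = α u v := by
          rw [ih]
          calc α ⟨reflFun m i u.1, refl_mem_sphere u.2⟩ (fun a => reflLin m i (v a))
              = reflPullSph m k i α u v := by
                simp only [reflPullSph, AlternatingMap.compLinearMap_apply]
            _ = α u v := by rw [he i]

lemma phiPullTS_even {k : ℕ} (a : FormOn m (simplexSet m) k) :
    IsEvenSph m k (phiPullTS m k a) := by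
  intro i
  funext u; ext v
  show phiPullTS m k a ⟨reflFun m i u.1, refl_mem_sphere u.2⟩ (fun j => reflLin m i (v j))
    = phiPullTS m k a u v
  simp only [phiPullTS, AlternatingMap.compLinearMap_apply]
  refine formOn_apply_congr a ?_ ?_
  · show Phi m (reflFun m i u.1) = Phi m u.1
    rw [reflFun_sgnF, Phi_sgnF]
  · funext j
    rw [LinearMap.comp_apply, LinearMap.comp_apply]
    funext l
    rw [dPhi_apply, dPhi_apply]
    have hdot : ∑ b, reflFun m i u.1 b * reflLin m i (v j) b = ∑ b, u.1 b * v j b := by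
      rw [reflLin_apply, reflFun_sgnF, reflFun_sgnF (u := v j)]
      exact sgn_dot {i} u.1 (v j)
    rw [projSph_apply, projSph_apply, hdot, reflLin_apply]
    simp only [reflFun]
    split <;> ring

lemma phiPullTS_zeroGamma {k : ℕ} {a : FormOn m (simplexSet m) k} (hb : vanishBdry m k a) :
    zeroOnGammaSph m k (phiPullTS m k a) := by
  rintro u ⟨i, hi⟩ v _
  show (a ⟨Phi m u.1, phi_mem_simplex u.2⟩).compLinearMap ((dPhi m u.1).comp (projSph m u.1)) v = 0
  rw [AlternatingMap.compLinearMap_apply]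
  refine hb _ i (by simp [Phi, hi]) _ (fun j => ⟨?_, ?_⟩)
  · rw [LinearMap.comp_apply]
    exact sum_dPhi_projSph u.2 _
  · rw [LinearMap.comp_apply, dPhi_apply, hi]
    ring

end Aux5
section Aux6
open MvPolynomial

lemma cast_sub_one {r : ℕ} (hr : 1 ≤ r) : (r : ℤ) - 1 = ((r - 1 : ℕ) : ℤ) := by
  omega

lemma mapsTo_main {m k r : ℕ} (hr : 1 ≤ r) :
    Set.MapsTo (phiPullTS m k) (PLmosim m k (r : ℤ))
      {α | α ∈ PLmsph m k (2 * (r : ℤ) + k) ∧ zeroOnGammaSph m k α ∧ IsEvenSph m k α} := by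
  rintro a ⟨⟨F, hF, rfl⟩, hbdry⟩
  refine ⟨?_, phiPullTS_zeroGamma hbdry, phiPullTS_even _⟩
  obtain ⟨β, hβ, rfl⟩ := hF
  have hβ' := (mem_PL_iff (cast_sub_one hr)).mp hβ
  refine ⟨iU ((2:ℝ)⁻¹ • phiPull m (k+1) β), ⟨(2:ℝ)⁻¹ • phiPull m (k+1) β, ?_, rfl⟩, ?_⟩
  · refine (mem_PL_iff (s := 2*r+k-1) (by omega)).mpr ?_
    have h := phiPull_mem_PL hβ' ((2:ℝ)⁻¹)
    intro v
    obtain ⟨p, hp1, hp2⟩ := h v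
    exact ⟨p, by omega, hp2⟩
  · funext u; ext v
    have lhs : resSph m k (iU ((2:ℝ)⁻¹ • phiPull m (k+1) β)) u v
        = β (Phi m u.1) (Matrix.vecCons (Phi m u.1)
            (fun j => dPhi m u.1 (projSph m u.1 (v j)))) := by
      show iU ((2:ℝ)⁻¹ • phiPull m (k+1) β) u.1 (fun a => projSph m u.1 (v a)) = _
      rw [iU_apply]
      have e1 : ((2:ℝ)⁻¹ • phiPull m (k+1) β) u.1
            (Matrix.vecCons u.1 (fun a => projSph m u.1 (v a)))
          = (2:ℝ)⁻¹ * β (Phi m u.1) (fun a => dPhi m u.1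
              ((Matrix.vecCons u.1 (fun a => projSph m u.1 (v a))) a)) := by
        simp [phiPull, AlternatingMap.compLinearMap_apply]
      rw [e1, show (fun a => dPhi m u.1 ((Matrix.vecCons u.1 (fun a => projSph m u.1 (v a))) a))
          = Matrix.vecCons (dPhi m u.1 u.1) (fun j => dPhi m u.1 (projSph m u.1 (v j)))
          from dPhi_cons u.1 u.1 _, dPhi_self, alt_cons_smul]
      ring
    rw [lhs, phiPullTS_resSim, iU_apply]

lemma injOn_main {m k r : ℕ} (hm : 2 ≤ m) (hr : 1 ≤ r) :
    Set.InjOn (phiPullTS m k) (PLmosim m k (r : ℤ)) := by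
  rintro a ⟨⟨F, hF, rfl⟩, hba⟩ b ⟨⟨G, hG, rfl⟩, hbb⟩ hab
  have hFP : ∀ v, ∃ p : MvPolynomial (Fin m) ℝ, p.totalDegree ≤ r ∧
      ∀ x, F x v = MvPolynomial.eval x p := by
    obtain ⟨β, hβ, rfl⟩ := hF
    intro v
    obtain ⟨p, h1, h2⟩ := iU_mem_PL ((mem_PL_iff (cast_sub_one hr)).mp hβ) v
    exact ⟨p, by omega, h2⟩
  have hGP : ∀ v, ∃ p : MvPolynomial (Fin m) ℝ, p.totalDegree ≤ r ∧
      ∀ x, G x v = MvPolynomial.eval x p := by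
    obtain ⟨β, hβ, rfl⟩ := hG
    intro v
    obtain ⟨p, h1, h2⟩ := iU_mem_PL ((mem_PL_iff (cast_sub_one hr)).mp hβ) v
    exact ⟨p, by omega, h2⟩
  funext x; ext v
  obtain ⟨p, hpd, hpv⟩ := hFP (fun j => projSim m (v j))
  obtain ⟨q, hqd, hqv⟩ := hGP (fun j => projSim m (v j))
  have hm0 : (m : ℝ) ≠ 0 := Nat.cast_ne_zero.mpr (by omega)
  have hmpos : (0:ℝ) < m := Nat.cast_pos.mpr (by omega)
  have key : ∀ y : Vec m, y ∈ simplexSet m → (∀ i, 0 < y i) →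
      MvPolynomial.eval y (p - q) = 0 := by
    intro y hy hypos
    obtain ⟨husph, huphi⟩ := sqrt_sphere hy
    set u : Vec m := fun i => Real.sqrt (y i) with hu
    have hupos : ∀ l, 0 < u l := fun l => Real.sqrt_pos.mpr (hypos l)
    set w : Fin k → Vec m := fun j => projSim m (v j) with hw
    set v' : Fin k → Vec m := fun j l => w j l / (2 * u l) with hv'
    have hdot : ∀ j, ∑ l, u l * v' j l = 0 := by
      intro j
      have hterm : ∀ l, u l * v' j l = w j l / 2 := by
        intro l
        have hne := (hupos l).ne'
        rw [hv']
        field_simp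
      rw [Finset.sum_congr rfl fun l _ => hterm l, ← Finset.sum_div, hw,
        sum_projSim_zero hm0, zero_div]
    have hdphi : ∀ j, dPhi m u (projSph m u (v' j)) = w j := by
      intro j
      have hproj : projSph m u (v' j) = v' j := by
        funext l
        rw [projSph_apply, hdot j, zero_mul, sub_zero]
      rw [hproj]
      funext l
      have hne := (hupos l).ne'
      rw [dPhi_apply, hv']
      field_simp
    have h1 := congrFun hab ⟨u, husph⟩
    have h2 := congrArg (fun (T : (Vec m) [⋀^Fin k]→ₗ[ℝ] ℝ) => T v') h1
    rw [phiPullTS_resSim, phiPullTS_resSim] at h2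
    rw [show (fun j => dPhi m u (projSph m u (v' j))) = w from funext hdphi] at h2
    rw [huphi] at h2
    rw [hw] at h2
    rw [hpv y, hqv y] at h2
    rw [map_sub, h2, sub_self]
  have hlim : MvPolynomial.eval x.1 (p - q) = 0 := by
    refine simplex_limit (c := fun _ => (m : ℝ)⁻¹) ?_
    intro t ht0 ht1
    have hpt : ∀ i, 0 < ((1 - t) • x.1 + t • ((fun _ => (m:ℝ)⁻¹) : Vec m)) i := by
      intro i
      have hxi := x.2.1 i
      have h1t : (0:ℝ) ≤ 1 - t := by linarith
      have hb1 := mul_nonneg h1t hxi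
      have hb2 := mul_pos ht0 (inv_pos.mpr hmpos)
      simp only [Pi.add_apply, Pi.smul_apply, smul_eq_mul]
      linarith
    refine key _ ⟨fun i => le_of_lt (hpt i), ?_⟩ hpt
    simp only [Pi.add_apply, Pi.smul_apply, smul_eq_mul]
    rw [Finset.sum_add_distrib, ← Finset.mul_sum, ← Finset.mul_sum, x.2.2,
      Finset.sum_const, Finset.card_univ, Fintype.card_fin, nsmul_eq_mul]
    field_simp
    ring
  have hfin : MvPolynomial.eval x.1 p = MvPolynomial.eval x.1 q := by
    rw [map_sub] at hlim
    linarith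
  show resSim m k F x v = resSim m k G x v
  calc resSim m k F x v = F x.1 (fun j => projSim m (v j)) := by
        simp [resSim, AlternatingMap.compLinearMap_apply]
    _ = MvPolynomial.eval x.1 p := hpv x.1
    _ = MvPolynomial.eval x.1 q := hfin
    _ = G x.1 (fun j => projSim m (v j)) := (hqv x.1).symm
    _ = resSim m k G x v := by
        simp [resSim, AlternatingMap.compLinearMap_apply]

end Aux6
section Aux7
open MvPolynomial

variable {m : ℕ}

lemma reflPull_apply {k : ℕ} (i : Fin m) (F : Form m k) (u : Vec m) (v : Fin k → Vec m) :
    reflPull m k i F u v = F (reflFun m i u) (fun a => reflLin m i (v a)) := by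
  simp [reflPull, AlternatingMap.compLinearMap_apply]

lemma sPull_apply {k : ℕ} (s : Finset (Fin m)) (F : Form m k) (u : Vec m) (v : Fin k → Vec m) :
    sPull k s F u v = F (sgnF s u) (fun a => sgnL s (v a)) := by
  simp [sPull, AlternatingMap.compLinearMap_apply]

lemma reflLin_single (i j : Fin m) :
    reflLin m i (Pi.single j (1:ℝ)) = (if j = i then (-1:ℝ) else 1) • (Pi.single j 1 : Vec m) := by
  rw [reflLin_apply]
  funext l
  simp only [reflFun, Pi.smul_apply, smul_eq_mul, Pi.single_apply]
  by_cases h2 : l = j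
  · subst h2
    by_cases h1 : l = i <;> simp [h1]
  · simp [h2]

lemma sPull_mem_PL {k s : ℕ} (t : Finset (Fin m)) {F : Form m k}
    (hF : ∀ v, ∃ p : MvPolynomial (Fin m) ℝ, p.totalDegree ≤ s ∧
      ∀ x, F x v = MvPolynomial.eval x p) :
    ∀ v, ∃ p : MvPolynomial (Fin m) ℝ, p.totalDegree ≤ s ∧
      ∀ u, sPull k t F u v = MvPolynomial.eval u p := by
  intro v
  obtain ⟨p, hdeg, hval⟩ := hF (fun a => sgnL t (v a))
  refine ⟨bind₁ (sgnP t) p, le_trans (totalDegree_sgnBind_le _ _) hdeg, fun u => ?_⟩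
  rw [eval_sgnBind, sPull_apply]
  exact hval (sgnF t u)

lemma surjOn_main {m k r : ℕ} (hm : 2 ≤ m) (hr : 1 ≤ r) :
    Set.SurjOn (phiPullTS m k) (PLmosim m k (r : ℤ))
      {α | α ∈ PLmsph m k (2 * (r : ℤ) + k) ∧ zeroOnGammaSph m k α ∧ IsEvenSph m k α} := by
  rintro α ⟨⟨Gw, ⟨B, hB, rfl⟩, rfl⟩, hγ, he⟩
  classical
  have hB' := (mem_PL_iff (s := 2*r+k-1) (by omega) (F := B)).mp hB
  set Bb : Form m (k+1) := (2^m : ℝ)⁻¹ • ∑ s : Finset (Fin m), sPull (k+1) s B with hBb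
  have hBb_apply : ∀ u w, Bb u w
      = (2^m : ℝ)⁻¹ * ∑ s : Finset (Fin m), sPull (k+1) s B u w := by
    intro u w
    rw [hBb]
    simp only [Pi.smul_apply, AlternatingMap.smul_apply, smul_eq_mul, Finset.sum_apply]
    rw [altSum_apply]
  -- Bb is a polynomial form
  have hBbPL : ∀ v, ∃ p : MvPolynomial (Fin m) ℝ, p.totalDegree ≤ 2*r+k-1 ∧
      ∀ u, Bb u v = MvPolynomial.eval u p := by
    intro v
    choose ps hpsdeg hpsval using fun s : Finset (Fin m) => sPull_mem_PL s hB' v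
    refine ⟨∑ s : Finset (Fin m), ((2^m : ℝ)⁻¹) • ps s,
      totalDegree_sum_smul_le _ _ _ (fun s _ => hpsdeg s), fun u => ?_⟩
    rw [eval_sum_smul, hBb_apply, Finset.mul_sum]
    exact Finset.sum_congr rfl fun s _ => by rw [hpsval s u]
  -- Bb is even
  have hBbEven : ∀ i, reflPull m (k+1) i Bb = Bb := by
    intro i
    funext u; ext w
    rw [reflPull_apply, hBb_apply, hBb_apply]
    congr 1
    refine Fintype.sum_bijective (fun s : Finset (Fin m) => symmDiff s {i})
      (Function.Involutive.bijective fun s => symmDiff_symmDiff_cancel_right {i} s) _ _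
      fun s => ?_
    have h1 := congrFun (reflPull_sPull i s B) u
    have h2 := congrArg (fun (T : (Vec m) [⋀^Fin (k+1)]→ₗ[ℝ] ℝ) => T w) h1
    rw [reflPull_apply] at h2
    exact h2
  -- coefficients
  obtain ⟨P, hPdeg, hPval⟩ := PL_coeffs hBbPL
  -- parity of coefficients for injective g
  have parity : ∀ g : Fin (k+1) → Fin m, Function.Injective g →
      ∀ d ∈ (P g).support, ∀ i : Fin m,
        (i ∈ Finset.image g Finset.univ ↔ Odd (d i)) := by
    intro g hginj d hd i
    set ι : ℝ := if i ∈ Finset.image g Finset.univ then (-1:ℝ) else 1 with hι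
    have hprod : (∏ a, (if g a = i then (-1:ℝ) else 1)) = ι := by
      by_cases hmem : i ∈ Finset.image g Finset.univ
      · obtain ⟨a₀, _, ha₀⟩ := Finset.mem_image.mp hmem
        rw [Finset.prod_eq_single a₀
          (fun b _ hb => if_neg (fun hgb => hb (hginj (hgb.trans ha₀.symm))))
          (fun h => absurd (Finset.mem_univ a₀) h), if_pos ha₀, hι, if_pos hmem]
      · rw [Finset.prod_eq_one (fun a _ => if_neg
          (fun h => hmem (Finset.mem_image.mpr ⟨a, Finset.mem_univ a, h⟩))), hι, if_neg hmem]
    have hfun : ∀ u : Vec m, MvPolynomial.eval (sgnF {i} u) (P g)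
        = ι * MvPolynomial.eval u (P g) := by
      intro u
      have h1 := congrFun (hBbEven i) u
      have h2 := congrArg (fun (T : (Vec m) [⋀^Fin (k+1)]→ₗ[ℝ] ℝ) =>
        T (fun a => Pi.single (g a) 1)) h1
      rw [reflPull_apply] at h2
      -- LHS of h2 : Bb (reflFun m i u) (fun a => reflLin m i (Pi.single (g a) 1))
      rw [show (fun a => reflLin m i (Pi.single (g a) (1:ℝ)))
          = fun a => (if g a = i then (-1:ℝ) else 1) • (Pi.single (g a) 1 : Vec m) from
            funext fun a => reflLin_single i (g a)] at h2
      rw [show (Bb (reflFun m i u)) (fun a => (if g a = i then (-1:ℝ) else 1) • (Pi.single (g a) 1 : Vec m))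
          = (∏ a, (if g a = i then (-1:ℝ) else 1)) •
              (Bb (reflFun m i u)) (fun a => Pi.single (g a) 1) from
        (Bb (reflFun m i u)).toMultilinearMap.map_smul_univ _ _] at h2
      rw [hprod, hPval _ g, hPval _ g, smul_eq_mul] at h2
      have hι2 : ι * ι = 1 := by
        rw [hι]; split <;> norm_num
      have := congrArg (fun z => ι * z) h2
      rw [← mul_assoc, hι2, one_mul] at this
      rw [reflFun_sgnF] at this
      exact this
    have hpoly : bind₁ (sgnP {i}) (P g) = ι • P g := by
      refine MvPolynomial.funext fun u => ?_
      rw [eval_sgnBind, MvPolynomial.smul_eval]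
      exact hfun u
    have hcoeff := congrArg (fun p => MvPolynomial.coeff d p) hpoly
    rw [coeff_sgnBind, MvPolynomial.coeff_smul, smul_eq_mul] at hcoeff
    rw [Finset.prod_singleton] at hcoeff
    have hcne : MvPolynomial.coeff d (P g) ≠ 0 := MvPolynomial.mem_support_iff.mp hd
    have hsign : (-1:ℝ) ^ d i = ι := by
      have := mul_right_cancel₀ hcne hcoeff
      exact this
    by_cases hmem : i ∈ Finset.image g Finset.univ
    · simp only [hι, if_pos hmem] at hsign
      refine ⟨fun _ => ?_, fun _ => hmem⟩
      by_contra hodd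
      rw [Nat.not_odd_iff_even] at hodd
      rw [hodd.neg_one_pow] at hsign
      norm_num at hsign
    · simp only [hι, if_neg hmem] at hsign
      refine ⟨fun h => absurd h hmem, fun hodd => ?_⟩
      rw [hodd.neg_one_pow] at hsign
      norm_num at hsign
  -- square root of coefficients
  have key : ∀ g : Fin (k+1) → Fin m, ∃ Q : MvPolynomial (Fin m) ℝ,
      Q.totalDegree ≤ r - 1 ∧ ∀ u : Vec m,
        MvPolynomial.eval u (P g) = MvPolynomial.eval (Phi m u) Q * ∏ a, (2 * u (g a)) := by
    intro g
    by_cases hginj : Function.Injective g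
    · obtain ⟨q, hq1, hq2⟩ := even_decomp (P g) (Finset.image g Finset.univ) (hPdeg g)
        (parity g hginj)
      have hcard : (Finset.image g Finset.univ).card = k + 1 := by
        rw [Finset.card_image_of_injective _ hginj, Finset.card_univ, Fintype.card_fin]
      have hqdeg : q.totalDegree ≤ r - 1 := by
        rw [MvPolynomial.totalDegree]
        refine Finset.sup_le fun e he => ?_
        have := hq2 e he
        rw [hcard] at this
        omega
      refine ⟨(2^(k+1) : ℝ)⁻¹ • q,
        le_trans (MvPolynomial.totalDegree_smul_le _ _) hqdeg, fun u => ?_⟩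
      rw [← hq1, map_mul, eval_sqBind, MvPolynomial.smul_eval]
      rw [show MvPolynomial.eval u (∏ i ∈ Finset.image g Finset.univ, X i)
          = ∏ i ∈ Finset.image g Finset.univ, u i by rw [map_prod]; simp]
      rw [Finset.prod_image (fun a _ b _ h => hginj h)]
      rw [show (∏ a, (2 * u (g a))) = 2^(k+1) * ∏ a, u (g a) by
        rw [Finset.prod_mul_distrib, Finset.prod_const, Finset.card_univ, Fintype.card_fin]]
      have h2 : (2^(k+1) : ℝ) ≠ 0 := by positivity
      field_simp
    · refine ⟨0, by simp, fun u => ?_⟩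
      rw [map_zero, zero_mul, ← hPval u g]
      rw [Function.not_injective_iff] at hginj
      obtain ⟨a, b, hab, hne⟩ := hginj
      exact AlternatingMap.map_eq_zero_of_eq _ _ (by rw [hab]) hne
  choose Q hQdeg hQval using key
  -- the candidate form on the simplex side
  set C : Form m (k+1) := fun x => (((k+1).factorial : ℝ))⁻¹ •
    ∑ g : Fin (k+1) → Fin m, MvPolynomial.eval x (Q g) • Eg g with hC
  have hC_apply : ∀ x w, C x w = (((k+1).factorial : ℝ))⁻¹ *
      ∑ g : Fin (k+1) → Fin m, MvPolynomial.eval x (Q g) * Eg g w := by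
    intro x w
    rw [hC]
    simp only [AlternatingMap.smul_apply, smul_eq_mul, altSum_apply]
  -- the fundamental ambient identity : Bb = Φ* C
  have hBbC : ∀ (u : Vec m) (w : Fin (k+1) → Vec m),
      Bb u w = C (Phi m u) (fun a => dPhi m u (w a)) := by
    intro u w
    rw [alt_reconstruct (Bb u) w, hC_apply]
    congr 1
    refine Finset.sum_congr rfl fun g _ => ?_
    have hdet : Eg g (fun a => dPhi m u (w a)) = (∏ b, (2 * u (g b))) * Eg g w := by
      rw [Eg_apply, Eg_apply]
      rw [show (Matrix.of fun a b => dPhi m u (w a) (g b))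
          = Matrix.of fun a b => (fun b' => 2 * u (g b')) b * (Matrix.of fun a b => w a (g b)) a b by
        ext a b
        simp only [Matrix.of_apply]
        rw [dPhi_apply]]
      rw [Matrix.det_mul_row]
    rw [hdet, hPval u g, hQval g u]
    ring
  -- C is a polynomial form of degree ≤ r - 1
  have hCPL : ∀ v, ∃ p : MvPolynomial (Fin m) ℝ, p.totalDegree ≤ r - 1 ∧
      ∀ x, C x v = MvPolynomial.eval x p := by
    intro v
    refine ⟨∑ g : Fin (k+1) → Fin m, ((((k+1).factorial : ℝ))⁻¹ * Eg g v) • Q g,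
      totalDegree_sum_smul_le _ _ _ (fun g _ => hQdeg g), fun x => ?_⟩
    rw [eval_sum_smul, hC_apply, Finset.mul_sum]
    exact Finset.sum_congr rfl fun g _ => by ring
  -- the ambient candidate
  set D : Form m k := iU ((2:ℝ) • C) with hD
  have h2C : ∀ v, ∃ p : MvPolynomial (Fin m) ℝ, p.totalDegree ≤ r - 1 ∧
      ∀ x, ((2:ℝ) • C) x v = MvPolynomial.eval x p := by
    intro v
    obtain ⟨p, h1, h2⟩ := hCPL v
    refine ⟨(2:ℝ) • p, le_trans (MvPolynomial.totalDegree_smul_le _ _) h1, fun x => ?_⟩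
    rw [MvPolynomial.smul_eval]
    simp only [Pi.smul_apply, AlternatingMap.smul_apply, smul_eq_mul]
    rw [h2 x]
  have hDPL : ∀ v, ∃ p : MvPolynomial (Fin m) ℝ, p.totalDegree ≤ r ∧
      ∀ x, D x v = MvPolynomial.eval x p := by
    intro v
    obtain ⟨p, h1, h2⟩ := iU_mem_PL h2C v
    exact ⟨p, by omega, h2⟩
  -- key pointwise identity on the sphere : resSph (iU Bb) = resSph (iU B)
  have hres : ∀ (u : sphereSet m) (v : Fin k → Vec m),
      Bb u.1 (Matrix.vecCons u.1 (fun a => projSph m u.1 (v a)))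
        = resSph m k (iU B) u v := by
    intro u v
    rw [hBb_apply]
    have hterm : ∀ s : Finset (Fin m),
        sPull (k+1) s B u.1 (Matrix.vecCons u.1 (fun a => projSph m u.1 (v a)))
          = resSph m k (iU B) u v := by
      intro s
      have e1 : sPull (k+1) s B u.1 (Matrix.vecCons u.1 (fun a => projSph m u.1 (v a)))
          = iU (sPull (k+1) s B) u.1 (fun a => projSph m u.1 (v a)) := rfl
      rw [e1, iU_sPull]
      have e2 : sPull k s (iU B) u.1 (fun a => projSph m u.1 (v a))
          = resSph m k (sPull k s (iU B)) u v := by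
        simp [resSph, AlternatingMap.compLinearMap_apply]
      rw [e2, resSph_sPull, sPullSph_even he s]
    rw [Finset.sum_congr rfl fun s _ => hterm s, Finset.sum_const, Finset.card_univ,
      Fintype.card_finset, Fintype.card_fin, nsmul_eq_mul]
    have h2m : (2^m : ℝ) ≠ 0 := by positivity
    push_cast
    field_simp
  -- the main identity
  have hphi : phiPullTS m k (resSim m k D) = resSph m k (iU B) := by
    funext u; ext v
    rw [phiPullTS_resSim]
    have e1 : D (Phi m u.1) (fun j => dPhi m u.1 (projSph m u.1 (v j)))
        = 2 * C (Phi m u.1) (Matrix.vecCons (Phi m u.1)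
            (fun j => dPhi m u.1 (projSph m u.1 (v j)))) := by
      rw [hD, iU_apply]
      simp only [Pi.smul_apply, AlternatingMap.smul_apply, smul_eq_mul]
    rw [e1, ← hres u v, hBbC]
    rw [show (fun a => dPhi m u.1 ((Matrix.vecCons u.1 (fun a => projSph m u.1 (v a))) a))
        = Matrix.vecCons (dPhi m u.1 u.1) (fun j => dPhi m u.1 (projSph m u.1 (v j)))
        from dPhi_cons u.1 u.1 _, dPhi_self, alt_cons_smul]
  -- conclude
  refine ⟨resSim m k D, ⟨⟨D, ⟨(2:ℝ) • C, (mem_PL_iff (cast_sub_one hr)).mpr h2C, rfl⟩, rfl⟩, ?_⟩, hphi⟩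
  -- vanishBdry
  intro x i hxi w hw
  have hwfix : (fun j => projSim m (w j)) = w := funext fun j => projSim_fix (hw j).1
  have hres0 : resSim m k D x w = D x.1 w := by
    simp only [resSim, AlternatingMap.compLinearMap_apply]
    rw [hwfix]
  obtain ⟨p, hpdeg, hpval⟩ := hDPL w
  rw [hres0, hpval]
  have key2 : ∀ y : Vec m, y ∈ simplexSet m → y i = 0 → (∀ l, l ≠ i → 0 < y l) →
      MvPolynomial.eval y p = 0 := by
    intro y hy hyi hypos
    obtain ⟨husph, huphi⟩ := sqrt_sphere hy
    set u : Vec m := fun l => Real.sqrt (y l) with hu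
    have hui : u i = 0 := by rw [hu]; simp only [hyi, Real.sqrt_zero]
    set v' : Fin k → Vec m := fun j l => if l = i then 0 else w j l / (2 * u l) with hv'
    have hterm : ∀ j l, u l * v' j l = w j l / 2 := by
      intro j l
      by_cases hl : l = i
      · subst hl
        simp [hv', (hw j).2]
      · have hpos := hypos l hl
        have hne : u l ≠ 0 := ne_of_gt (Real.sqrt_pos.mpr hpos)
        rw [hv']
        simp only [if_neg hl]
        field_simp
    have hdot : ∀ j, ∑ l, u l * v' j l = 0 := by
      intro j
      rw [Finset.sum_congr rfl fun l _ => hterm j l, ← Finset.sum_div, (hw j).1, zero_div]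
    have hdphi : ∀ j, dPhi m u (projSph m u (v' j)) = w j := by
      intro j
      have hproj : projSph m u (v' j) = v' j := by
        funext l
        rw [projSph_apply, hdot j, zero_mul, sub_zero]
      rw [hproj]
      funext l
      rw [dPhi_apply]
      have := hterm j l
      linarith
    have h0 := hγ ⟨u, husph⟩ ⟨i, hui⟩ v' (fun j => hdot j)
    have h1 := congrFun hphi ⟨u, husph⟩
    have h2 := congrArg (fun T : (Vec m) [⋀^Fin k]→ₗ[ℝ] ℝ => T v') h1
    rw [h0] at h2
    rw [phiPullTS_resSim] at h2
    rw [show (fun j => dPhi m u (projSph m u (v' j))) = w from funext hdphi, huphi] at h2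
    rw [← hpval y]
    exact h2
  have hm1 : (0:ℝ) < (m:ℝ) - 1 := by
    have : (2:ℝ) ≤ (m:ℝ) := by exact_mod_cast hm
    linarith
  refine simplex_limit (c := fun l => if l = i then 0 else ((m:ℝ)-1)⁻¹) ?_
  intro t ht0 ht1
  have hcoord : ∀ l, ((1 - t) • x.1 + t • ((fun l => if l = i then 0 else ((m:ℝ)-1)⁻¹) : Vec m)) l
      = (1-t) * x.1 l + t * (if l = i then 0 else ((m:ℝ)-1)⁻¹) := by
    intro l
    simp [Pi.add_apply, Pi.smul_apply, smul_eq_mul]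
  have h1t : (0:ℝ) ≤ 1 - t := by linarith
  refine key2 _ ⟨fun l => ?_, ?_⟩ ?_ ?_
  · rw [hcoord]
    have := x.2.1 l
    have h1 := mul_nonneg h1t this
    have h2 : 0 ≤ t * (if l = i then 0 else ((m:ℝ)-1)⁻¹) := by
      refine mul_nonneg (le_of_lt ht0) ?_
      split
      · exact le_refl 0
      · positivity
    linarith
  · -- sum = 1
    rw [Finset.sum_congr rfl fun l _ => hcoord l, Finset.sum_add_distrib, ← Finset.mul_sum,
      ← Finset.mul_sum, x.2.2]
    have hsumc : ∑ l, (if l = i then (0:ℝ) else ((m:ℝ)-1)⁻¹) = 1 := by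
      have : ∀ l, (if l = i then (0:ℝ) else ((m:ℝ)-1)⁻¹)
          = ((m:ℝ)-1)⁻¹ - (if l = i then ((m:ℝ)-1)⁻¹ else 0) := by
        intro l; split <;> ring
      rw [Finset.sum_congr rfl fun l _ => this l, Finset.sum_sub_distrib, Finset.sum_const,
        Finset.card_univ, Fintype.card_fin, Finset.sum_ite_eq', if_pos (Finset.mem_univ i),
        nsmul_eq_mul]
      field_simp
    rw [hsumc]
    ring
  · -- i coordinate = 0
    rw [hcoord, hxi, if_pos rfl]
    ring
  · -- positivity off the face
    intro l hl
    rw [hcoord, if_neg hl]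
    have := x.2.1 l
    have h1 := mul_nonneg h1t this
    have h2 : 0 < t * ((m:ℝ)-1)⁻¹ := mul_pos ht0 (inv_pos.mpr hm1)
    linarith

end Aux7

theorem stmt11 (n k r : ℕ) (hn : 1 ≤ n) (hk : k ≤ n) (hr : 1 ≤ r) :
    Set.BijOn (phiPullTS (n + 1) k) (PLmosim (n + 1) k (r : ℤ))
      {α | α ∈ PLmsph (n + 1) k (2 * (r : ℤ) + k) ∧ zeroOnGammaSph (n + 1) k α ∧
          IsEvenSph (n + 1) k α} ∧
    (∀ a b, phiPullTS (n + 1) k (a + b) = phiPullTS (n + 1) k a + phiPullTS (n + 1) k b) ∧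
    (∀ (c : ℝ) a, phiPullTS (n + 1) k (c • a) = c • phiPullTS (n + 1) k a) := by
  refine ⟨⟨mapsTo_main hr, injOn_main (by omega) hr, surjOn_main (by omega) hr⟩, ?_, ?_⟩
  · intro a b
    funext u; ext v
    simp [phiPullTS, AlternatingMap.compLinearMap_apply, AlternatingMap.add_apply, Pi.add_apply]
  · intro c a
    funext u; ext v
    simp [phiPullTS, AlternatingMap.compLinearMap_apply, AlternatingMap.smul_apply, Pi.smul_apply]

end
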